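/- Let (V, ‖·‖) be a normed vector space, ε > 0, Θ ⊆ V convex with diam(Θ) ≥ 12ε, k ≥ 1, and m ≥ k(N(B(0,1), ‖·‖, 1/4) + 1). Suppose E ⊆ Θ is a finite set of expert locations and f is a deterministic voting rule (a function mapping the candidate locations and any reported top-k ranking profile to a candidate) such that for every set C of m candidate locations in Θ, every q ∈ ℝ^m, and every top-k ranking profile ≻^k consistent with q, the selected candidate satisfies max_j q_j − q_{f(C,E,≻^k)} ≤ ε. Then |E| ≥ M(Θ, ‖·‖, 24ε)·(m/(k(N(B(0,1), ‖·‖, 1/4) + 1)) − 1). -/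

import Mathlib

open scoped Classical

section VotingDefs

variable {V : Type*} [NormedAddCommGroup V] [NormedSpace ℝ V]

/-- An expert with top-`k` ranking `pref : Fin k → Fin m` prefers candidate `j` to `j'`:
`j` is ranked at some position `h`, and `j'` is either unranked or ranked strictly later. -/
def Prefers {k m : ℕ} (pref : Fin k → Fin m) (j j' : Fin m) : Prop :=
  ∃ h : Fin k, pref h = j ∧
    ((∀ h' : Fin k, pref h' ≠ j') ∨ ∃ h' : Fin k, pref h' = j' ∧ h < h')

/-- `q` is consistent with the profile `pref` of top-`k` rankings, given candidate
locations `c` and expert locations `e`. -/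
def Consistent {n k m : ℕ} (c : Fin m → V) (e : Fin n → V)
    (pref : Fin n → Fin k → Fin m) (q : Fin m → ℝ) : Prop :=
  ∀ (i : Fin n) (j j' : Fin m), Prefers (pref i) j j' →
    q j' - ‖e i - c j'‖ ≤ q j - ‖e i - c j‖

/-- Edge relation of the graph `G(C, E, ≻^k)`. -/
def HasEdge {n k m : ℕ} (pref : Fin n → Fin k → Fin m) (j j' : Fin m) : Prop :=
  ∃ i : Fin n, Prefers (pref i) j j'

/-- Weight of the edge `j → j'` in `G(C, E, ≻^k)`: the minimum of
`‖e i - c j'‖ - ‖e i - c j‖` over experts `i` preferring `j` to `j'`. -/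
noncomputable def weightG {n k m : ℕ} (c : Fin m → V) (e : Fin n → V)
    (pref : Fin n → Fin k → Fin m) (j j' : Fin m) : ℝ :=
  sInf {x : ℝ | ∃ i : Fin n, Prefers (pref i) j j' ∧ x = ‖e i - c j'‖ - ‖e i - c j‖}

/-- A directed walk along `edge` from `g` to `h`, recorded as its list of vertices. -/
def IsWalk {α : Type*} (edge : α → α → Prop) (l : List α) (g h : α) : Prop :=
  l.Chain' edge ∧ l.head? = some g ∧ l.getLast? = some h

/-- Total weight of a walk (sum of the weights of consecutive pairs). -/
noncomputable def walkWeight {α : Type*} (w : α → α → ℝ) (l : List α) : ℝ :=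
  ((l.zip l.tail).map fun p => w p.1 p.2).sum

/-- Shortest directed path distance; `+∞` if there is no directed path. -/
noncomputable def distG {α : Type*} (edge : α → α → Prop) (w : α → α → ℝ) (g h : α) : EReal :=
  sInf {x : EReal | ∃ l : List α, IsWalk edge l g h ∧ x = ((walkWeight w l : ℝ) : EReal)}

/-- Distance (number of edges) in an unweighted directed graph; `⊤` if unreachable. -/
noncomputable def hopDist {α : Type*} (edge : α → α → Prop) (g h : α) : ℕ∞ :=
  sInf {x : ℕ∞ | ∃ l : List α, IsWalk edge l g h ∧ x = ((l.length - 1 : ℕ) : ℕ∞)}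

/-- `diam(G, S)`: the longest shortest-path length between two vertices of `S`. -/
noncomputable def diamS {α : Type*} (edge : α → α → Prop) (S : Set α) : ℕ∞ :=
  ⨆ (u : α) (_ : u ∈ S) (v : α) (_ : v ∈ S), hopDist edge u v

/-- Edge relation of the unweighted graph `G(C, E, ≻^k)[δ]`. -/
def EdgeDelta {n k m : ℕ} (e : Fin n → V) (pref : Fin n → Fin k → Fin m) (δ : ℝ)
    (j j' : Fin m) : Prop :=
  ∃ i i' : Fin n, Prefers (pref i) j j' ∧ Prefers (pref i') j' j ∧ ‖e i - e i'‖ ≤ δ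

/-- Minimum cardinality of an internal `δ`-cover of `Θ`; `⊤` if no finite cover exists. -/
noncomputable def coverNum (Θ : Set V) (δ : ℝ) : ℕ∞ :=
  sInf {x : ℕ∞ | ∃ X : Finset V, ↑X ⊆ Θ ∧ (∀ θ ∈ Θ, ∃ v ∈ X, ‖θ - v‖ ≤ δ) ∧ x = (X.card : ℕ∞)}

end VotingDefs

theorem core_bound {V : Type*} [NormedAddCommGroup V] [NormedSpace ℝ V]
    (ε : ℝ) (hε : 0 < ε) (Θ : Set V) (hconv : Convex ℝ Θ)
    (hdiam : ENNReal.ofReal (12 * ε) ≤ EMetric.diam Θ)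
    (k m nE : ℕ) (hk : 1 ≤ k)
    (e : Fin nE → V) (he : ∀ i, e i ∈ Θ)
    (f : (Fin m → V) → (Fin nE → Fin k → Fin m) → Fin m)
    (hf : ∀ (c : Fin m → V), (∀ j, c j ∈ Θ) →
      ∀ (q : Fin m → ℝ) (pref : Fin nE → Fin k → Fin m),
        (∀ i, Function.Injective (pref i)) → Consistent c e pref q →
        ∀ j : Fin m, q j - q (f c pref) ≤ ε)
    (p : V) (hp : p ∈ Θ)
    (X : Finset V) (hXsub : ↑X ⊆ Metric.closedBall (0 : V) 1)
    (hXcov : ∀ θ ∈ Metric.closedBall (0 : V) 1, ∃ x ∈ X, ‖θ - x‖ ≤ 1 / 4) :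
    m ≤ k * (X.card + 1) *
      ((Finset.univ.filter fun i => ‖e i - p‖ < 12 * ε).card + 1) := by
  classical
  by_contra hbig
  push_neg at hbig
  -- Step A : a point w ∈ Θ with ‖w - p‖ = 4ε
  have hwex : ∃ w ∈ Θ, ‖w - p‖ = 4 * ε := by
    have hz : ∃ z ∈ Θ, 4 * ε ≤ ‖z - p‖ := by
      by_contra hc
      push_neg at hc
      have hdle : EMetric.diam Θ ≤ ENNReal.ofReal (8 * ε) := by
        apply EMetric.diam_le
        intro x hx y hy
        rw [edist_dist]
        apply ENNReal.ofReal_le_ofReal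
        have h1 := hc x hx
        have h2 := hc y hy
        have : dist x y ≤ dist x p + dist p y := dist_triangle x p y
        rw [dist_comm p y] at this
        simp only [dist_eq_norm] at this ⊢
        linarith
      have := hdiam.trans hdle
      rw [ENNReal.ofReal_le_ofReal_iff (by positivity)] at this
      linarith
    obtain ⟨z, hzΘ, hz4⟩ := hz
    have hnz : (0:ℝ) < ‖z - p‖ := by linarith
    refine ⟨p + (4 * ε / ‖z - p‖) • (z - p), ?_, ?_⟩
    · exact hconv.add_smul_sub_mem hp hzΘ ⟨by positivity, by rw [div_le_one hnz]; linarith⟩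
    · rw [add_sub_cancel_left, norm_smul, Real.norm_eq_abs,
        abs_of_nonneg (by positivity), div_mul_cancel₀]
      exact ne_of_gt hnz
  obtain ⟨w, hwΘ, hw4⟩ := hwex
  -- Step B : anchors for far experts
  have haex : ∀ i : Fin nE, ∃ y : V, 12 * ε ≤ ‖e i - p‖ →
      (y ∈ Θ ∧ ‖y - p‖ = 12 * ε ∧ ‖e i - y‖ = ‖e i - p‖ - 12 * ε) := by
    intro i
    by_cases hfar : 12 * ε ≤ ‖e i - p‖
    · have hD : (0:ℝ) < ‖e i - p‖ := by linarith
      set s : ℝ := 12 * ε / ‖e i - p‖ with hs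
      have hs0 : 0 ≤ s := by positivity
      have hs1 : s ≤ 1 := by rw [hs, div_le_one hD]; linarith
      refine ⟨p + s • (e i - p), fun _ => ⟨hconv.add_smul_sub_mem hp (he i) ⟨hs0, hs1⟩, ?_, ?_⟩⟩
      · rw [add_sub_cancel_left, norm_smul, Real.norm_eq_abs, abs_of_nonneg hs0,
          hs, div_mul_cancel₀]
        exact ne_of_gt hD
      · have heq : e i - (p + s • (e i - p)) = (1 - s) • (e i - p) := by
          rw [sub_smul, one_smul]; abel
        rw [heq, norm_smul, Real.norm_eq_abs, abs_of_nonneg (by linarith),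
          sub_mul, one_mul, hs, div_mul_cancel₀ _ (ne_of_gt hD)]
    · exact ⟨p, fun h => absurd h hfar⟩
  choose a ha using haex
  -- X is nonempty
  have hXne : X.Nonempty := by
    obtain ⟨x, hx, -⟩ := hXcov 0 (by simp)
    exact ⟨x, hx⟩
  -- Step C : covering directions
  have hξex : ∀ i : Fin nE, ∃ x : V, x ∈ X ∧ (12 * ε ≤ ‖e i - p‖ →
      ‖a i - (p + (12 * ε) • x)‖ ≤ 3 * ε) := by
    intro i
    by_cases hfar : 12 * ε ≤ ‖e i - p‖
    · have h12 : (0:ℝ) < 12 * ε := by linarith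
      set θ : V := (12 * ε)⁻¹ • (a i - p) with hθ
      have hθn : ‖θ‖ = 1 := by
        rw [hθ, norm_smul, Real.norm_eq_abs, abs_of_nonneg (by positivity),
          (ha i hfar).2.1, inv_mul_cancel₀ (ne_of_gt h12)]
      obtain ⟨x, hxX, hxc⟩ := hXcov θ (by simp [hθn])
      refine ⟨x, hxX, fun _ => ?_⟩
      have key : a i - (p + (12 * ε) • x) = (12 * ε) • (θ - x) := by
        rw [smul_sub, hθ, smul_inv_smul₀ (ne_of_gt h12)]
        abel
      rw [key, norm_smul, Real.norm_eq_abs, abs_of_nonneg (by positivity)]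
      nlinarith
    · exact ⟨hXne.choose, hXne.choose_spec, fun h => absurd h hfar⟩
  choose ξ hξX hξ using hξex
  -- representative anchor per direction
  have hylocex : ∀ x : V, ∃ y : V, (∃ i, 12 * ε ≤ ‖e i - p‖ ∧ ξ i = x) →
      (∃ i, 12 * ε ≤ ‖e i - p‖ ∧ ξ i = x ∧ y = a i) := by
    intro x
    by_cases h : ∃ i, 12 * ε ≤ ‖e i - p‖ ∧ ξ i = x
    · obtain ⟨i, hi1, hi2⟩ := h
      exact ⟨a i, fun _ => ⟨i, hi1, hi2, rfl⟩⟩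
    · exact ⟨p, fun hc => absurd hc h⟩
  choose yloc hyloc using hylocex
  set Far : Finset (Fin nE) := Finset.univ.filter (fun i => 12 * ε ≤ ‖e i - p‖) with hFar
  set Y : Finset V := Far.image (fun i => yloc (ξ i)) with hY
  have hYcard : Y.card ≤ X.card := by
    have hsub : Y ⊆ X.image yloc := by
      intro y hy
      rw [hY, Finset.mem_image] at hy
      obtain ⟨i, hi, rfl⟩ := hy
      exact Finset.mem_image.mpr ⟨ξ i, hξX i, rfl⟩
    exact le_trans (Finset.card_le_card hsub) Finset.card_image_le
  have hYΘ : ∀ y ∈ Y, y ∈ Θ := by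
    intro y hy
    rw [hY, Finset.mem_image] at hy
    obtain ⟨i, hi, rfl⟩ := hy
    rw [hFar, Finset.mem_filter] at hi
    obtain ⟨i₀, hfar₀, hx₀, hy₀⟩ := hyloc (ξ i) ⟨i, hi.2, rfl⟩
    rw [hy₀]
    exact (ha i₀ hfar₀).1
  have hyloc6 : ∀ i, 12 * ε ≤ ‖e i - p‖ → ‖e i - yloc (ξ i)‖ ≤ ‖e i - p‖ - 6 * ε := by
    intro i hfar
    obtain ⟨i₀, hfar₀, hx₀, hy₀⟩ := hyloc (ξ i) ⟨i, hfar, rfl⟩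
    have h1 : ‖a i - (p + (12 * ε) • ξ i)‖ ≤ 3 * ε := hξ i hfar
    have h2 : ‖a i₀ - (p + (12 * ε) • ξ i)‖ ≤ 3 * ε := by
      rw [← hx₀]; exact hξ i₀ hfar₀
    have h3 : ‖a i - a i₀‖ ≤ 6 * ε := by
      have := norm_sub_le_norm_sub_add_norm_sub (a i) (p + (12 * ε) • ξ i) (a i₀)
      have h2' : ‖p + (12 * ε) • ξ i - a i₀‖ = ‖a i₀ - (p + (12 * ε) • ξ i)‖ :=
        norm_sub_rev _ _
      linarith [norm_sub_le_norm_sub_add_norm_sub (a i) (p + (12 * ε) • ξ i) (a i₀)]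
    have h4 : ‖e i - a i‖ = ‖e i - p‖ - 12 * ε := (ha i hfar).2.2
    have h5 : ‖e i - yloc (ξ i)‖ ≤ ‖e i - a i‖ + ‖a i - a i₀‖ := by
      rw [hy₀]
      exact norm_sub_le_norm_sub_add_norm_sub _ _ _
    linarith
  -- nearest anchor for far experts
  have hσex : ∀ i : Fin nE, ∃ s : V, 12 * ε ≤ ‖e i - p‖ →
      (s ∈ Y ∧ (∀ y ∈ Y, ‖e i - s‖ ≤ ‖e i - y‖) ∧ ‖e i - s‖ ≤ ‖e i - p‖ - 6 * ε) := by
    intro i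
    by_cases hfar : 12 * ε ≤ ‖e i - p‖
    · have hiY : yloc (ξ i) ∈ Y := by
        rw [hY]
        exact Finset.mem_image.mpr ⟨i, by rw [hFar]; simp [hfar], rfl⟩
      obtain ⟨s, hsY, hsmin⟩ := Finset.exists_min_image Y (fun y => ‖e i - y‖) ⟨_, hiY⟩
      exact ⟨s, fun _ => ⟨hsY, hsmin, le_trans (hsmin _ hiY) (hyloc6 i hfar)⟩⟩
    · exact ⟨p, fun h => absurd h hfar⟩
  choose σ hσ using hσex
  -- Step D : allocation of candidate indices
  set T : Finset (Fin nE) := Finset.univ.filter (fun i => ‖e i - p‖ < 12 * ε) with hT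
  have hcardK : Fintype.card ((↥Y × Fin k) ⊕ ((↥T × Fin k) ⊕ Fin 2)) ≤ Fintype.card (Fin m) := by
    simp only [Fintype.card_sum, Fintype.card_prod, Fintype.card_coe, Fintype.card_fin]
    have h1 : Y.card * k + (T.card * k + 2) ≤ X.card * k + T.card * k + 2 := by
      nlinarith [hYcard]
    have h2 : X.card * k + T.card * k + 2 ≤ k * (X.card + 1) * (T.card + 1) + 1 := by
      have hexp : k * (X.card + 1) * (T.card + 1)
          = k * X.card * T.card + k * X.card + k * T.card + k := by ring
      rw [hexp]
      nlinarith [hk, Nat.zero_le (k * X.card * T.card)]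
    omega
  obtain ⟨ι⟩ := Function.Embedding.nonempty_of_card_le hcardK
  have hιinj : Function.Injective ι := ι.injective
  set bp : Fin m := ι (Sum.inr (Sum.inr 0)) with hbp
  set bw : Fin m := ι (Sum.inr (Sum.inr 1)) with hbw
  -- candidate locations
  set desc : ((↥Y × Fin k) ⊕ ((↥T × Fin k) ⊕ Fin 2)) → V :=
    Sum.elim (fun s => (s.1 : V))
      (Sum.elim (fun s => e (s.1 : Fin nE)) (fun r => if r = 1 then w else p)) with hdesc
  set c : Fin m → V := Function.extend ι desc (fun _ => p) with hcdef
  have hcval : ∀ s, c (ι s) = desc s := fun s => hιinj.extend_apply _ _ _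
  -- classification predicates
  set CA : Fin m → Prop := fun j => ∃ s : ↥Y × Fin k, ι (Sum.inl s) = j with hCA
  set CO : Fin m → Prop := fun j => ∃ s : ↥T × Fin k, ι (Sum.inr (Sum.inl s)) = j with hCO
  have hcA : ∀ s : ↥Y × Fin k, c (ι (Sum.inl s)) = (s.1 : V) := fun s => by
    rw [hcval]; simp [hdesc]
  have hcO : ∀ s : ↥T × Fin k, c (ι (Sum.inr (Sum.inl s))) = e (s.1 : Fin nE) := fun s => by
    rw [hcval]; simp [hdesc]
  have hcbp : c bp = p := by rw [hbp, hcval]; simp [hdesc]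
  have hcbw : c bw = w := by rw [hbw, hcval]; simp [hdesc]
  have hCACO : ∀ j, CA j → ¬ CO j := by
    rintro j ⟨s, rfl⟩ ⟨s', hs'⟩
    exact absurd (hιinj hs') (by simp)
  have hbpCA : ¬ CA bp := by rintro ⟨s, hs⟩; rw [hbp] at hs; have := hιinj hs; simp at this
  have hbpCO : ¬ CO bp := by rintro ⟨s, hs⟩; rw [hbp] at hs; have := hιinj hs; simp at this
  have hbwCA : ¬ CA bw := by rintro ⟨s, hs⟩; rw [hbw] at hs; have := hιinj hs; simp at this
  have hbwCO : ¬ CO bw := by rintro ⟨s, hs⟩; rw [hbw] at hs; have := hιinj hs; simp at this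
  have hbpbw : bp ≠ bw := by
    intro hcon
    rw [hbp, hbw] at hcon
    have := hιinj hcon
    simp at this
  have hcY : ∀ j, CA j → c j ∈ Y := by
    rintro j ⟨s, rfl⟩
    rw [hcA s]
    exact s.1.2
  have hcbase : ∀ j, ¬ CA j → ¬ CO j → c j = p ∨ c j = w := by
    intro j hca hco
    by_cases hr : ∃ s, ι s = j
    · obtain ⟨s, rfl⟩ := hr
      rcases s with s | s | r
      · exact absurd ⟨s, rfl⟩ hca
      · exact absurd ⟨s, rfl⟩ hco
      · rw [hcval]
        fin_cases r
        · left; simp [hdesc]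
        · right; simp [hdesc]
    · left
      rw [hcdef, Function.extend_apply' _ _ _ hr]
  have hcΘ : ∀ j, c j ∈ Θ := by
    intro j
    by_cases hr : ∃ s, ι s = j
    · obtain ⟨s, rfl⟩ := hr
      rw [hcval]
      rcases s with s | s | r
      · exact hYΘ _ s.1.2
      · exact he _
      · by_cases h1 : r = 1 <;> simp [hdesc, h1, hwΘ, hp]
    · rw [hcdef, Function.extend_apply' _ _ _ hr]
      exact hp
  -- Step E : the preference profile
  set pref : Fin nE → Fin k → Fin m := fun i h =>
    if hfar : 12 * ε ≤ ‖e i - p‖ then ι (Sum.inl (⟨⟨σ i, (hσ i hfar).1⟩, h⟩))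
    else ι (Sum.inr (Sum.inl (⟨⟨i, by rw [hT]; simp [not_le.mp hfar]⟩, h⟩))) with hpref
  have hprefInj : ∀ i, Function.Injective (pref i) := by
    intro i a b hab
    rw [hpref] at hab
    by_cases hfar : 12 * ε ≤ ‖e i - p‖
    · simp only [dif_pos hfar] at hab
      have := hιinj hab
      simpa using this
    · simp only [dif_neg hfar] at hab
      have := hιinj hab
      simpa using this
  have hprefFc : ∀ i, ∀ hfar : 12 * ε ≤ ‖e i - p‖, ∀ h : Fin k,
      c (pref i h) = σ i ∧ CA (pref i h) := by
    intro i hfar h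
    rw [hpref]
    simp only [dif_pos hfar]
    exact ⟨hcA _, ⟨_, rfl⟩⟩
  have hprefNc : ∀ i, ¬ (12 * ε ≤ ‖e i - p‖) → ∀ h : Fin k,
      c (pref i h) = e i ∧ ∃ s : ↥T × Fin k, (s.1 : Fin nE) = i ∧
        ι (Sum.inr (Sum.inl s)) = pref i h := by
    intro i hfar h
    rw [hpref]
    simp only [dif_neg hfar]
    exact ⟨hcO _, ⟨_, rfl, rfl⟩⟩
  -- Step F : consistent quality vectors for arbitrary base qualities ≤ 2ε
  have scenario : ∀ q0 : Fin m → ℝ, (∀ j, q0 j ≤ 2 * ε) →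
      ∃ q : Fin m → ℝ, Consistent c e pref q ∧
        (∀ j, ¬ CO j → q j = if CA j then 0 else q0 j) ∧
        (∀ s : ↥T × Fin k, ∀ r : ℝ,
          (∀ j', ¬ CO j' → (if CA j' then (0:ℝ) else q0 j') - ‖e (s.1 : Fin nE) - c j'‖ ≤ r) →
          q (ι (Sum.inr (Sum.inl s))) ≤ r) := by
    intro q0 hq0
    set u : Fin m → ℝ := fun j => if CA j then 0 else q0 j with hu
    have hBAne : (Finset.univ.filter (fun j => ¬ CO j)).Nonempty :=
      ⟨bp, Finset.mem_filter.mpr ⟨Finset.mem_univ _, hbpCO⟩⟩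
    set Q : Fin nE → ℝ := fun i =>
      ((Finset.univ.filter (fun j => ¬ CO j)).image (fun j => u j - ‖e i - c j‖)).max'
        (hBAne.image _) with hQ
    have hQmax : ∀ i j, ¬ CO j → u j - ‖e i - c j‖ ≤ Q i := by
      intro i j hj
      apply Finset.le_max'
      exact Finset.mem_image.mpr ⟨j, Finset.mem_filter.mpr ⟨Finset.mem_univ _, hj⟩, rfl⟩
    have hQmem : ∀ i, ∃ j, ¬ CO j ∧ Q i = u j - ‖e i - c j‖ := by
      intro i
      have hmm := Finset.max'_mem _ (hBAne.image (fun j => u j - ‖e i - c j‖))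
      rw [Finset.mem_image] at hmm
      obtain ⟨j, hj, hje⟩ := hmm
      exact ⟨j, (Finset.mem_filter.mp hj).2, hje.symm⟩
    have hQle : ∀ i, ∀ r : ℝ, (∀ j, ¬ CO j → u j - ‖e i - c j‖ ≤ r) → Q i ≤ r := by
      intro i r hr
      apply Finset.max'_le
      intro x hx
      rw [Finset.mem_image] at hx
      obtain ⟨j, hj, rfl⟩ := hx
      exact hr j (Finset.mem_filter.mp hj).2
    set q : Fin m → ℝ := Function.extend (fun s : ↥T × Fin k => ι (Sum.inr (Sum.inl s)))
      (fun s => Q (s.1 : Fin nE)) u with hq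
    have hinj2 : Function.Injective (fun s : ↥T × Fin k => ι (Sum.inr (Sum.inl s))) := by
      intro s1 s2 hs
      have := hιinj hs
      simpa using this
    have hqO : ∀ s : ↥T × Fin k, q (ι (Sum.inr (Sum.inl s))) = Q (s.1 : Fin nE) :=
      fun s => hinj2.extend_apply _ _ _
    have hqB : ∀ j, ¬ CO j → q j = u j := by
      intro j hj
      rw [hq]
      exact Function.extend_apply' _ _ _ hj
    have hfarB : ∀ i, 12 * ε ≤ ‖e i - p‖ → ∀ j, ¬ CO j →
        u j - ‖e i - c j‖ ≤ -‖e i - σ i‖ := by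
      intro i hfar j hj
      by_cases hca : CA j
      · have huj : u j = 0 := by rw [hu]; simp [hca]
        rw [huj]
        have := (hσ i hfar).2.1 _ (hcY j hca)
        linarith
      · have huj : u j = q0 j := by rw [hu]; simp [hca]
        have hdist : ‖e i - p‖ - 4 * ε ≤ ‖e i - c j‖ := by
          rcases hcbase j hca hj with hcp | hcw
          · rw [hcp]; linarith
          · rw [hcw]
            have htri : ‖e i - p‖ ≤ ‖e i - w‖ + ‖w - p‖ :=
              norm_sub_le_norm_sub_add_norm_sub _ _ _
            linarith
        have hσb := (hσ i hfar).2.2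
        have := hq0 j
        rw [huj]
        linarith
    have hcons : Consistent c e pref q := by
      intro i j j' hpr
      obtain ⟨h, hjeq, -⟩ := hpr
      by_cases hfar : 12 * ε ≤ ‖e i - p‖
      · have hcj : c j = σ i := by rw [← hjeq]; exact (hprefFc i hfar h).1
        have hqj : q j = 0 := by
          rw [← hjeq]
          have hCAj : CA (pref i h) := (hprefFc i hfar h).2
          rw [hqB _ (hCACO _ hCAj), hu]
          simp [hCAj]
        rw [hcj, hqj]
        by_cases hco : CO j'
        · obtain ⟨s', rfl⟩ := hco
          rw [hqO s', hcO s']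
          obtain ⟨j₀, hj₀, hje⟩ := hQmem (s'.1 : Fin nE)
          have htri : ‖e i - c j₀‖ ≤ ‖e i - e (s'.1 : Fin nE)‖ + ‖e (s'.1 : Fin nE) - c j₀‖ :=
            norm_sub_le_norm_sub_add_norm_sub _ _ _
          have hb := hfarB i hfar j₀ hj₀
          rw [hje]
          linarith
        · rw [hqB _ hco]
          have := hfarB i hfar j' hco
          linarith
      · obtain ⟨hcj, s, hs1, hs2⟩ := hprefNc i hfar h
        have hqj : q j = Q i := by rw [← hjeq, ← hs2, hqO, hs1]
        have hcje : c j = e i := by rw [← hjeq]; exact hcj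
        rw [hqj, hcje, sub_self, norm_zero, sub_zero]
        by_cases hco : CO j'
        · obtain ⟨s', rfl⟩ := hco
          rw [hqO s', hcO s']
          obtain ⟨j₀, hj₀, hje⟩ := hQmem (s'.1 : Fin nE)
          have htri : ‖e i - c j₀‖ ≤ ‖e i - e (s'.1 : Fin nE)‖ + ‖e (s'.1 : Fin nE) - c j₀‖ :=
            norm_sub_le_norm_sub_add_norm_sub _ _ _
          have hmx := hQmax i j₀ hj₀
          rw [hje]
          linarith
        · rw [hqB _ hco]
          exact hQmax i j' hco
    refine ⟨q, hcons, fun j hj => by rw [hqB _ hj, hu], fun s r hr => ?_⟩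
    rw [hqO]
    apply hQle
    intro j hj
    have := hr j hj
    rw [hu]
    exact this
  -- Step G : punish the output of the rule
  set g : Fin m := f c pref with hg
  by_cases hgCO : CO g
  · obtain ⟨sg, hsg⟩ := hgCO
    set i0 : Fin nE := (sg.1 : Fin nE) with hi0
    set star : Fin m := if ε < ‖e i0 - p‖ then bp else bw with hstar
    have hstarCA : ¬ CA star := by rw [hstar]; split_ifs; exacts [hbpCA, hbwCA]
    have hstarCO : ¬ CO star := by rw [hstar]; split_ifs; exacts [hbpCO, hbwCO]
    have hstard : ε < ‖e i0 - c star‖ := by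
      rw [hstar]
      split_ifs with hd
      · rw [hcbp]; exact hd
      · rw [hcbw]
        push_neg at hd
        have htri : ‖w - p‖ ≤ ‖w - e i0‖ + ‖e i0 - p‖ :=
          norm_sub_le_norm_sub_add_norm_sub _ _ _
        have hrev : ‖w - e i0‖ = ‖e i0 - w‖ := norm_sub_rev _ _
        rw [hw4, hrev] at htri
        linarith
    set q0 : Fin m → ℝ := fun j => if j = star then 2 * ε else -(10 * ε) with hq0def
    have hq0le : ∀ j, q0 j ≤ 2 * ε := by
      intro j; rw [hq0def]; dsimp only; split_ifs <;> linarith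
    obtain ⟨q, hcons, hqval, hqOb⟩ := scenario q0 hq0le
    have hqstar : q star = 2 * ε := by
      rw [hqval star hstarCO, if_neg hstarCA, hq0def]; simp
    have hqg : q g ≤ max (2 * ε - ‖e i0 - c star‖) 0 := by
      rw [← hsg]
      apply hqOb sg
      intro j' hj'
      by_cases hca : CA j'
      · rw [if_pos hca]
        have hnn : (0:ℝ) ≤ ‖e (sg.1 : Fin nE) - c j'‖ := norm_nonneg _
        exact le_trans (by linarith) (le_max_right _ _)
      · rw [if_neg hca, hq0def]
        dsimp only
        by_cases hjs : j' = star
        · rw [if_pos hjs, hjs]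
          exact le_max_left _ _
        · rw [if_neg hjs]
          have hnn : (0:ℝ) ≤ ‖e (sg.1 : Fin nE) - c j'‖ := norm_nonneg _
          exact le_trans (by linarith) (le_max_right _ _)
    have hcontra := hf c hcΘ q pref hprefInj hcons star
    rw [← hg] at hcontra
    have hmaxlt : max (2 * ε - ‖e i0 - c star‖) 0 < ε := max_lt (by linarith) hε
    linarith
  · by_cases hgCA : CA g
    · set q0 : Fin m → ℝ := fun j => if j = bp then 2 * ε else 0 with hq0def
      have hq0le : ∀ j, q0 j ≤ 2 * ε := by
        intro j; rw [hq0def]; dsimp only; split_ifs <;> linarith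
      obtain ⟨q, hcons, hqval, -⟩ := scenario q0 hq0le
      have hqbp : q bp = 2 * ε := by
        rw [hqval bp hbpCO, if_neg hbpCA, hq0def]; simp
      have hqg : q g = 0 := by rw [hqval g hgCO, if_pos hgCA]
      have hcontra := hf c hcΘ q pref hprefInj hcons bp
      rw [← hg] at hcontra
      linarith
    · set q0 : Fin m → ℝ := fun j => if j = g then -(10 * ε) else 0 with hq0def
      have hq0le : ∀ j, q0 j ≤ 2 * ε := by
        intro j; rw [hq0def]; dsimp only; split_ifs <;> linarith
      obtain ⟨q, hcons, hqval, -⟩ := scenario q0 hq0le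
      have hqg : q g = -(10 * ε) := by
        rw [hqval g hgCO, if_neg hgCA, hq0def]; simp
      set j0 : Fin m := if g = bp then bw else bp with hj0
      have hj0CA : ¬ CA j0 := by rw [hj0]; split_ifs; exacts [hbwCA, hbpCA]
      have hj0CO : ¬ CO j0 := by rw [hj0]; split_ifs; exacts [hbwCO, hbpCO]
      have hj0ne : j0 ≠ g := by
        rw [hj0]
        split_ifs with hgb
        · rw [hgb]; exact hbpbw.symm
        · exact fun hcon => hgb hcon.symm
      have hqj0 : q j0 = 0 := by
        rw [hqval j0 hj0CO, if_neg hj0CA, hq0def]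
        simp [hj0ne]
      have hcontra := hf c hcΘ q pref hprefInj hcons j0
      rw [← hg] at hcontra
      linarith

/-- **general lower bound.** Let `Θ ⊆ V` be convex with `diam(Θ) ≥ 12ε`, and
`m ≥ k(N(B(0,1), ‖·‖, 1/4) + 1)`. If a committee `e` of `nE` experts located in `Θ` together
with a deterministic voting rule `f` guarantees regret at most `ε` for every set of `m`
candidates in `Θ`, every quality vector, and every consistent top-`k` profile, then
`nE ≥ M(Θ, ‖·‖, 24ε) · (m/(k(N(B(0,1), ‖·‖, 1/4) + 1)) - 1)`; equivalently, the latter bound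
holds with `M` replaced by the cardinality of an arbitrary `24ε`-packing of `Θ`. -/
theorem statement8 {V : Type*} [NormedAddCommGroup V] [NormedSpace ℝ V]
    (ε : ℝ) (hε : 0 < ε) (Θ : Set V) (hconv : Convex ℝ Θ)
    (hdiam : ENNReal.ofReal (12 * ε) ≤ EMetric.diam Θ)
    (k m nE : ℕ) (hk : 1 ≤ k)
    (hm : (k : ℕ∞) * (coverNum (Metric.closedBall (0 : V) 1) (1 / 4) + 1) ≤ (m : ℕ∞))
    (e : Fin nE → V) (he : ∀ i, e i ∈ Θ)
    (f : (Fin m → V) → (Fin nE → Fin k → Fin m) → Fin m)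
    (hf : ∀ (c : Fin m → V), (∀ j, c j ∈ Θ) →
      ∀ (q : Fin m → ℝ) (pref : Fin nE → Fin k → Fin m),
        (∀ i, Function.Injective (pref i)) → Consistent c e pref q →
        ∀ j : Fin m, q j - q (f c pref) ≤ ε) :
    ∀ P : Finset V, ↑P ⊆ Θ → (∀ x ∈ P, ∀ y ∈ P, x ≠ y → 24 * ε ≤ ‖x - y‖) →
      (P.card : ℝ) *
          ((m : ℝ) / ((k : ℝ) *
            (((coverNum (Metric.closedBall (0 : V) 1) (1 / 4)).toNat : ℝ) + 1)) - 1)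
        ≤ (nE : ℝ) := by
    classical
  intro P hPsub hPsep
  set CN := coverNum (Metric.closedBall (0 : V) 1) (1 / 4) with hCN
  have hk0 : (k : ℕ∞) ≠ 0 := Nat.cast_ne_zero.mpr (by omega)
  have hCNtop : CN ≠ ⊤ := by
    intro htop
    rw [htop, top_add, ENat.mul_top hk0, top_le_iff] at hm
    exact (ENat.coe_ne_top m) hm
  have hSne : {x : ℕ∞ | ∃ X : Finset V, ↑X ⊆ Metric.closedBall (0 : V) 1 ∧
      (∀ θ ∈ Metric.closedBall (0 : V) 1, ∃ v ∈ X, ‖θ - v‖ ≤ 1 / 4) ∧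
      x = (X.card : ℕ∞)}.Nonempty := by
    by_contra hne
    rw [Set.not_nonempty_iff_eq_empty] at hne
    apply hCNtop
    rw [hCN]
    unfold coverNum
    rw [hne, sInf_empty]
  have hmem : CN ∈ {x : ℕ∞ | ∃ X : Finset V, ↑X ⊆ Metric.closedBall (0 : V) 1 ∧
      (∀ θ ∈ Metric.closedBall (0 : V) 1, ∃ v ∈ X, ‖θ - v‖ ≤ 1 / 4) ∧
      x = (X.card : ℕ∞)} := by
    rw [hCN]
    unfold coverNum
    exact csInf_mem hSne
  obtain ⟨X, hXsub, hXcov, hXcard⟩ := hmem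
  have hXN : X.card = CN.toNat := by rw [hXcard]; simp
  have hper : ∀ p ∈ P, (m : ℝ) / ((k : ℝ) * ((CN.toNat : ℝ) + 1)) - 1 ≤
      (((Finset.univ.filter fun i => ‖e i - p‖ < 12 * ε).card : ℝ)) := by
    intro p hpP
    have hcb := core_bound ε hε Θ hconv hdiam k m nE hk e he f hf p (hPsub hpP) X hXsub hXcov
    rw [hXN] at hcb
    set tp := (Finset.univ.filter fun i => ‖e i - p‖ < 12 * ε).card with htp
    have hcbR : (m : ℝ) ≤ (k : ℝ) * ((CN.toNat : ℝ) + 1) * ((tp : ℝ) + 1) := by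
      exact_mod_cast hcb
    have hkpos : (0 : ℝ) < (k : ℝ) := by exact_mod_cast Nat.lt_of_lt_of_le Nat.zero_lt_one hk
    have hdpos : (0 : ℝ) < (k : ℝ) * ((CN.toNat : ℝ) + 1) := by positivity
    have hdiv : (m : ℝ) / ((k : ℝ) * ((CN.toNat : ℝ) + 1)) ≤ (tp : ℝ) + 1 := by
      rw [div_le_iff₀ hdpos]
      nlinarith [hcbR]
    linarith
  have hdisj : ∀ x ∈ P, ∀ y ∈ P, x ≠ y →
      Disjoint (Finset.univ.filter fun i => ‖e i - x‖ < 12 * ε)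
               (Finset.univ.filter fun i => ‖e i - y‖ < 12 * ε) := by
    intro x hx y hy hxy
    rw [Finset.disjoint_left]
    intro i hix hiy
    rw [Finset.mem_filter] at hix hiy
    have hsep := hPsep x hx y hy hxy
    have htri : ‖x - y‖ ≤ ‖x - e i‖ + ‖e i - y‖ := norm_sub_le_norm_sub_add_norm_sub _ _ _
    rw [norm_sub_rev x (e i)] at htri
    have h1 := hix.2
    have h2 : ‖e i - y‖ < 12 * ε := hiy.2
    linarith
  have hsum : ∑ p ∈ P, (Finset.univ.filter fun i => ‖e i - p‖ < 12 * ε).card ≤ nE := by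
    rw [← Finset.card_biUnion hdisj]
    calc (P.biUnion fun p => Finset.univ.filter fun i => ‖e i - p‖ < 12 * ε).card
        ≤ Fintype.card (Fin nE) := Finset.card_le_univ _
      _ = nE := Fintype.card_fin nE
  calc (P.card : ℝ) * ((m : ℝ) / ((k : ℝ) * ((CN.toNat : ℝ) + 1)) - 1)
      = ∑ _p ∈ P, ((m : ℝ) / ((k : ℝ) * ((CN.toNat : ℝ) + 1)) - 1) := by
        rw [Finset.sum_const, nsmul_eq_mul]
    _ ≤ ∑ p ∈ P, (((Finset.univ.filter fun i => ‖e i - p‖ < 12 * ε).card : ℕ) : ℝ) :=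
        Finset.sum_le_sum hper
    _ = ((∑ p ∈ P, (Finset.univ.filter fun i => ‖e i - p‖ < 12 * ε).card : ℕ) : ℝ) := by
        rw [Nat.cast_sum]
    _ ≤ (nE : ℝ) := Nat.cast_le.mpr hsum
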